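/- Let d ≥ 3 and w ≥ d + 1 be integers, let k be a positive integer, and let e₁, …, e_d be the standard basis of ℝ^d. Define P(d,w,k) as the convex hull of the set {0} ∪ {e_i : 1 ≤ i ≤ d−1} ∪ {−j·e_d : 1 ≤ j ≤ w−d−1} ∪ {e₁ + ⋯ + e_{d−1} + k·e_d}. Then P(d,w,k) is a d-dimensional convex lattice polytope with exactly w lattice points, i.e. |P(d,w,k) ∩ ℤ^d| = w. -/

import Mathlib

open MeasureTheory

noncomputable section

/-- The canonical embedding of integer vectors into real vectors. -/
def intVec {d : ℕ} (x : Fin d → ℤ) : Fin d → ℝ := fun i => (x i : ℝ)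

/-- `P` is a convex lattice polytope: the convex hull of a finite set of lattice points. -/
def IsConvexLatticePolytope (d : ℕ) (P : Set (Fin d → ℝ)) : Prop :=
  ∃ V : Finset (Fin d → ℤ), P = convexHull ℝ (intVec '' (V : Set (Fin d → ℤ)))

/-- `P` is `d`-dimensional: its affine span is all of `ℝ^d`. -/
def IsFullDim (d : ℕ) (P : Set (Fin d → ℝ)) : Prop :=
  affineSpan ℝ P = ⊤

/-- The set of lattice points of `P`. -/
def latticePts (d : ℕ) (P : Set (Fin d → ℝ)) : Set (Fin d → ℤ) :=
  {x | intVec x ∈ P}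

/-- The lattice `ℤ^d` viewed inside `ℝ^d`. -/
def latticeSet (d : ℕ) : Set (Fin d → ℝ) := Set.range (intVec (d := d))

/-- Two subsets of `ℝ^d` are lattice-equivalent if some affine bijection of `ℝ^d`
preserving `ℤ^d` maps one onto the other. -/
def LatticeEquiv (d : ℕ) (P₁ P₂ : Set (Fin d → ℝ)) : Prop :=
  ∃ σ : (Fin d → ℝ) ≃ᵃ[ℝ] (Fin d → ℝ), σ '' latticeSet d = latticeSet d ∧ P₂ = σ '' P₁

/-- The type of equivalence classes of `d`-dimensional convex lattice polytopes
satisfying the predicate `Q`, modulo lattice equivalence. -/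
def ClassesType (d : ℕ) (Q : Set (Fin d → ℝ) → Prop) : Type :=
  Quot (fun P₁ P₂ : {P : Set (Fin d → ℝ) // IsConvexLatticePolytope d P ∧ IsFullDim d P ∧ Q P} =>
    LatticeEquiv d P₁.1 P₂.1)

/-- `P` is centrally symmetric (with some center `c`, i.e. `P = 2c - P`). -/
def IsCentrallySymmetric (d : ℕ) (P : Set (Fin d → ℝ)) : Prop :=
  ∃ c : Fin d → ℝ, ∀ x, x ∈ P ↔ (2 : ℝ) • c - x ∈ P

/-- The polytope `P(d,w,k)`: the convex hull of `0`, the basis vectors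
`e₁, …, e_{d-1}`, the points `-j·e_d` for `1 ≤ j ≤ w - d - 1`, and the point
`e₁ + ⋯ + e_{d-1} + k·e_d` (here `e_d` is the last coordinate direction). -/
def Pdwk (d w : ℕ) (k : ℤ) : Set (Fin d → ℝ) :=
  convexHull ℝ ({0} ∪ {x | ∃ i : Fin d, (i : ℕ) < d - 1 ∧ x = Pi.single i 1}
    ∪ {x | ∃ j : ℕ, 1 ≤ j ∧ j ≤ w - d - 1 ∧
        x = fun i : Fin d => if (i : ℕ) = d - 1 then -(j : ℝ) else 0}
    ∪ {fun i : Fin d => if (i : ℕ) = d - 1 then (k : ℝ) else 1})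

open Finset

lemma card_filter_lt (d : ℕ) (hd : 3 ≤ d) :
    (univ.filter (fun i : Fin d => (i:ℕ) < d-1)).card = d - 1 := by
  have h : (univ.filter (fun i : Fin d => (i:ℕ) < d-1)) = univ.erase ⟨d-1, by omega⟩ := by
    ext i
    have h2 : (i:ℕ) < d := i.isLt
    simp only [mem_filter, mem_univ, true_and, mem_erase, ne_eq, Fin.ext_iff, and_true]
    omega
  rw [h, card_erase_of_mem (mem_univ _), card_univ, Fintype.card_fin]

lemma pdwk_valid (d w : ℕ) (k : ℤ) (hd : 3 ≤ d)
    (a b c C : ℝ) (i0 : Fin d) (hi0 : (i0 : ℕ) < d - 1)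
    (h0 : 0 ≤ C) (h1 : a + c ≤ C) (h2 : c ≤ C)
    (h3 : ∀ j : ℕ, 1 ≤ j → j ≤ w - d - 1 → b * (-(j:ℝ)) ≤ C)
    (h4 : a + b * (k:ℝ) + c * ((d:ℝ)-1) ≤ C)
    {x : Fin d → ℝ} (hx : x ∈ Pdwk d w k) :
    a * x i0 + b * x ⟨d-1, by omega⟩ + c * ∑ i ∈ univ.filter (fun i : Fin d => (i:ℕ) < d-1), x i ≤ C := by
  set idx : Fin d := ⟨d-1, by omega⟩ with hidx
  set f : (Fin d → ℝ) → ℝ :=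
    fun x => a * x i0 + b * x idx + c * ∑ i ∈ univ.filter (fun i : Fin d => (i:ℕ) < d-1), x i
    with hf
  have hlin : IsLinearMap ℝ f := by
    constructor
    · intro u v
      simp only [hf, Pi.add_apply, Finset.sum_add_distrib]
      ring
    · intro r u
      simp only [hf, Pi.smul_apply, smul_eq_mul, ← Finset.mul_sum]
      ring
  have hidxval : ((idx : ℕ) = d - 1) := rfl
  have hcast : ((d - 1 : ℕ) : ℝ) = (d : ℝ) - 1 := by
    rw [Nat.cast_sub (by omega : 1 ≤ d), Nat.cast_one]
  have key : Pdwk d w k ⊆ {y | f y ≤ C} := by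
    apply convexHull_min _ (convex_halfSpace_le hlin C)
    rintro y (((rfl | ⟨i, hi, rfl⟩) | ⟨j, hj1, hj2, rfl⟩) | rfl)
    · simp [hf, h0]
    · have hidxne : idx ≠ i := by
        intro h; rw [Fin.ext_iff, hidxval] at h; omega
      have hsum : ∑ j ∈ univ.filter (fun j : Fin d => (j:ℕ) < d-1), Pi.single i (1:ℝ) j = 1 := by
        rw [Finset.sum_congr rfl (fun j _ => Pi.single_apply i (1:ℝ) j),
          Finset.sum_ite_eq' _ i (fun _ => (1:ℝ))]
        simp [hi]
      simp only [Set.mem_setOf_eq, hf]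
      rw [hsum, Pi.single_eq_of_ne hidxne, Pi.single_apply]
      split_ifs <;> simp only [mul_one, mul_zero] <;> linarith
    · simp only [Set.mem_setOf_eq, hf]
      have hsum : ∑ i ∈ univ.filter (fun i : Fin d => (i:ℕ) < d-1),
          (if (i:ℕ) = d - 1 then -(j:ℝ) else 0) = 0 := by
        apply Finset.sum_eq_zero
        intro i hi
        simp only [mem_filter] at hi
        rw [if_neg (by omega : ¬ (i:ℕ) = d - 1)]
      rw [hsum, if_neg (by omega : ¬ (i0:ℕ) = d - 1), if_pos hidxval]
      have := h3 j hj1 hj2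
      simp only [mul_zero, add_zero, zero_add]
      linarith
    · simp only [Set.mem_setOf_eq, hf]
      have hsum : ∑ i ∈ univ.filter (fun i : Fin d => (i:ℕ) < d-1),
          (if (i:ℕ) = d - 1 then (k:ℝ) else 1) = (d:ℝ) - 1 := by
        rw [Finset.sum_congr rfl (fun i hi => by
          simp only [mem_filter] at hi
          exact if_neg (by omega : ¬ (i:ℕ) = d - 1)),
          Finset.sum_const, card_filter_lt d hd, nsmul_eq_mul, mul_one, hcast]
      rw [hsum, if_neg (by omega : ¬ (i0:ℕ) = d - 1), if_pos hidxval, mul_one]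
      exact h4
  exact key hx

def bI (d : ℕ) (j : ℕ) : Fin d → ℤ := fun i => if (i:ℕ) = d-1 then -(j:ℤ) else 0
def vI (d : ℕ) (k : ℤ) : Fin d → ℤ := fun i => if (i:ℕ) = d-1 then k else 1
def VS (d w : ℕ) (k : ℤ) : Finset (Fin d → ℤ) :=
  {0} ∪ (univ.filter (fun i : Fin d => (i:ℕ) < d-1)).image (fun i => Pi.single i 1)
  ∪ (Finset.Icc 1 (w-d-1)).image (bI d) ∪ {vI d k}

lemma intVec_zero (d : ℕ) : intVec (0 : Fin d → ℤ) = 0 := by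
  funext i; simp [intVec]

lemma intVec_single {d : ℕ} (i : Fin d) :
    intVec (Pi.single i (1:ℤ)) = Pi.single i (1:ℝ) := by
  funext j; simp [intVec, Pi.single_apply, apply_ite (Int.cast : ℤ → ℝ)]

lemma intVec_bI (d j : ℕ) :
    intVec (bI d j) = fun i : Fin d => if (i : ℕ) = d - 1 then -(j : ℝ) else 0 := by
  funext i; simp [intVec, bI, apply_ite (Int.cast : ℤ → ℝ)]

lemma intVec_vI (d : ℕ) (k : ℤ) :
    intVec (vI d k) = fun i : Fin d => if (i : ℕ) = d - 1 then (k : ℝ) else 1 := by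
  funext i; simp [intVec, vI, apply_ite (Int.cast : ℤ → ℝ)]

lemma genset (d w : ℕ) (k : ℤ) :
    intVec '' ((VS d w k : Set (Fin d → ℤ))) =
      ({0} ∪ {x | ∃ i : Fin d, (i : ℕ) < d - 1 ∧ x = Pi.single i 1}
      ∪ {x | ∃ j : ℕ, 1 ≤ j ∧ j ≤ w - d - 1 ∧
          x = fun i : Fin d => if (i : ℕ) = d - 1 then -(j : ℝ) else 0}
      ∪ {fun i : Fin d => if (i : ℕ) = d - 1 then (k : ℝ) else 1}) := by
  ext y
  constructor
  · rintro ⟨z, hz, rfl⟩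
    simp only [VS, coe_union, Set.mem_union, mem_coe, mem_union, mem_singleton, mem_image,
      mem_filter, mem_univ, true_and, Finset.mem_Icc] at hz
    rcases hz with ((rfl | ⟨i, hi, rfl⟩) | ⟨j, ⟨hj1, hj2⟩, rfl⟩) | rfl
    · exact Or.inl (Or.inl (Or.inl (by rw [intVec_zero]; rfl)))
    · exact Or.inl (Or.inl (Or.inr ⟨i, hi, by rw [intVec_single]⟩))
    · exact Or.inl (Or.inr ⟨j, hj1, hj2, by rw [intVec_bI]⟩)
    · exact Or.inr (by rw [intVec_vI]; rfl)
  · rintro (((rfl | ⟨i, hi, rfl⟩) | ⟨j, hj1, hj2, rfl⟩) | rfl)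
    · exact ⟨0, by simp [VS], intVec_zero d⟩
    · refine ⟨Pi.single i 1, ?_, intVec_single i⟩
      simp only [VS, mem_coe, mem_union, mem_singleton]
      exact Or.inl (Or.inl (Or.inr (mem_image_of_mem _ (by simp [hi]))))
    · refine ⟨bI d j, ?_, intVec_bI d j⟩
      simp only [VS, mem_coe, mem_union, mem_singleton]
      exact Or.inl (Or.inr (mem_image_of_mem _ (by simp [Finset.mem_Icc, hj1, hj2])))
    · exact ⟨vI d k, by simp [VS], intVec_vI d k⟩

lemma latticePts_eq (d w : ℕ) (k : ℤ) (hd : 3 ≤ d) (hw : d + 1 ≤ w) (hk : 0 < k) :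
    latticePts d (Pdwk d w k) = (VS d w k : Set (Fin d → ℤ)) := by
  apply Set.Subset.antisymm
  · intro x hx
    have hx : intVec x ∈ Pdwk d w k := hx
    set idx : Fin d := ⟨d-1, by omega⟩ with hidx
    set m : ℤ := ((w - d - 1 : ℕ) : ℤ) with hm
    have hm0 : 0 ≤ m := Int.ofNat_nonneg _
    set S : ℤ := ∑ i ∈ univ.filter (fun i : Fin d => (i:ℕ) < d-1), x i with hS
    have ival : ∀ (i0 : Fin d), (i0:ℕ) < d-1 → ∀ a b c C : ℤ,
        0 ≤ C → a + c ≤ C → c ≤ C →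
        (∀ j : ℕ, 1 ≤ j → j ≤ w-d-1 → b * (-(j:ℤ)) ≤ C) →
        (a + b*k + c*((d:ℤ)-1) ≤ C) →
        a * x i0 + b * x idx + c * S ≤ C := by
      intro i0 hi0 a b c C hC h1 h2 h3 h4
      have h := pdwk_valid d w k hd (a:ℝ) (b:ℝ) (c:ℝ) (C:ℝ) i0 hi0 (by exact_mod_cast hC)
        (by exact_mod_cast h1) (by exact_mod_cast h2)
        (fun j hj1 hj2 => by exact_mod_cast h3 j hj1 hj2)
        (by exact_mod_cast h4) hx
      simp only [intVec] at h
      exact_mod_cast h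
    have hd2 : (2:ℤ) ≤ (d:ℤ) - 1 := by
      have : (3:ℤ) ≤ (d:ℤ) := by exact_mod_cast hd
      linarith
    -- the seven valid inequalities
    have F1 : ∀ i : Fin d, (i:ℕ) < d-1 → 0 ≤ x i := by
      intro i hi
      have := ival i hi (-1) 0 0 0 le_rfl (by norm_num) le_rfl
        (fun j _ _ => by norm_num) (by norm_num)
      linarith
    have F7 : ∀ i : Fin d, (i:ℕ) < d-1 → x i ≤ 1 := by
      intro i hi
      have := ival i hi 1 0 0 1 (by norm_num) (by norm_num) (by norm_num)
        (fun j _ _ => by norm_num) (by norm_num)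
      linarith
    have F2 : ∀ i : Fin d, (i:ℕ) < d-1 → x idx ≤ k * x i := by
      intro i hi
      have := ival i hi (-k) 1 0 0 le_rfl (by omega) le_rfl
        (fun j hj1 hj2 => by simp) (le_of_eq (by ring))
      nlinarith [this]
    have F3 : ∀ i : Fin d, (i:ℕ) < d-1 → m * x i - x idx ≤ m := by
      intro i hi
      have := ival i hi m (-1) 0 m hm0 (by omega) hm0
        (fun j hj1 hj2 => by
          have : (j:ℤ) ≤ m := by rw [hm]; exact_mod_cast hj2
          linarith)
        (by linarith)
      linarith
    have F4 : ∀ i : Fin d, (i:ℕ) < d-1 → S - ((d:ℤ)-2) * x i ≤ 1 := by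
      intro i hi
      have := ival i hi (-(((d:ℤ))-2)) 0 1 1 (by norm_num) (by linarith) le_rfl
        (fun j _ _ => by norm_num) (by ring_nf; linarith)
      linarith
    have hi₀ : ((⟨0, by omega⟩ : Fin d) : ℕ) < d - 1 := by
      show 0 < d - 1; omega
    have F5 : (k+m) * S - x idx ≤ (k+m)*((d:ℤ)-1) - k := by
      have := ival ⟨0, by omega⟩ hi₀ 0 (-1) (k+m) ((k+m)*((d:ℤ)-1) - k)
        (by nlinarith) (by nlinarith) (by nlinarith)
        (fun j hj1 hj2 => by
          have hj : (j:ℤ) ≤ m := by rw [hm]; exact_mod_cast hj2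
          nlinarith)
        (le_of_eq (by ring))
      linarith
    -- case analysis
    suffices hxv : x ∈ VS d w k by exact Finset.mem_coe.mpr hxv
    by_cases hall : ∀ i : Fin d, (i:ℕ) < d-1 → x i = 1
    · -- x = vI
      have hScard : S = (d:ℤ) - 1 := by
        rw [hS, Finset.sum_congr rfl (fun i hi => hall i (mem_filter.mp hi).2),
          Finset.sum_const, card_filter_lt d hd, nsmul_eq_mul, mul_one]
        push_cast [Nat.cast_sub (by omega : 1 ≤ d)]
        ring
      have ht1 : x idx ≥ k := by
        have := F5
        rw [hScard] at this
        linarith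
      have ht2 : x idx ≤ k := by
        have := F2 ⟨0, by omega⟩ hi₀
        rw [hall _ hi₀] at this
        linarith
      refine Finset.mem_union_right _ (Finset.mem_singleton.mpr ?_)
      funext i
      rcases Nat.lt_or_ge (i:ℕ) (d-1) with h | h
      · rw [hall i h]
        simp only [vI, if_neg (by omega : ¬ (i:ℕ) = d - 1)]
      · have hie : i = idx := by
          apply Fin.ext
          have := i.isLt
          simp only [hidx]
          omega
        rw [hie]
        simp only [vI, if_pos (rfl : ((idx:ℕ)) = d-1)]
        rw [if_pos (show ((idx:ℕ)) = d-1 from rfl)]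
        exact le_antisymm ht2 ht1
    · push_neg at hall
      obtain ⟨i, hi, hine⟩ := hall
      have hizero : x i = 0 := by
        have := F1 i hi; have := F7 i hi; omega
      have ht0 : x idx ≤ 0 := by
        have := F2 i hi; rw [hizero] at this; simpa using this
      have hS1 : S ≤ 1 := by
        have := F4 i hi; rw [hizero] at this; simpa using this
      by_cases hallz : ∀ i' : Fin d, (i':ℕ) < d-1 → x i' = 0
      · -- x = 0 or bI
        have htm : -((w - d - 1 : ℕ) : ℤ) ≤ x idx := by
          have := F3 i hi
          rw [hizero, hm] at this
          simp only [mul_zero, zero_sub] at this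
          linarith
        have hxco : ∀ i' : Fin d, i' ≠ idx → x i' = 0 := by
          intro i' hne
          apply hallz
          have := i'.isLt
          have : (i':ℕ) ≠ d - 1 := fun h => hne (Fin.ext (by simp [hidx, h]))
          omega
        rcases eq_or_lt_of_le ht0 with h0 | h0
        · refine Finset.mem_union_left _ (Finset.mem_union_left _
            (Finset.mem_union_left _ (Finset.mem_singleton.mpr ?_)))
          funext i'
          rcases eq_or_ne i' idx with rfl | hne
          · simpa using h0
          · simpa using hxco i' hne
        · refine Finset.mem_union_left _ (Finset.mem_union_right _ (Finset.mem_image.mpr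
            ⟨(-(x idx)).toNat, Finset.mem_Icc.mpr ⟨by omega, by omega⟩, ?_⟩))
          funext i'
          by_cases hii : i' = idx
          · rw [hii]
            simp only [bI, if_pos (rfl : ((idx:ℕ)) = d-1), if_true]
            rw [if_pos (show ((idx:ℕ)) = d-1 from rfl)]
            omega
          · have : (i':ℕ) ≠ d - 1 := fun h => hii (Fin.ext (by simp [hidx, h]))
            simp only [bI, if_neg this]
            exact (hxco i' hii).symm
      · -- x = Pi.single i1 1
        push_neg at hallz
        obtain ⟨i1, hi1, hi1ne⟩ := hallz
        have hione : x i1 = 1 := by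
          have := F1 i1 hi1; have := F7 i1 hi1; omega
        have htnn : 0 ≤ x idx := by
          have := F3 i1 hi1; rw [hione, mul_one] at this; linarith
        have ht : x idx = 0 := le_antisymm ht0 htnn
        have hSge : 1 ≤ S := by
          rw [hS, ← hione]
          exact Finset.single_le_sum (fun i' hi' => F1 i' (mem_filter.mp hi').2)
            (mem_filter.mpr ⟨mem_univ _, hi1⟩)
        have hSeq : S = 1 := le_antisymm hS1 hSge
        have hrest : ∀ i' : Fin d, (i':ℕ) < d-1 → i' ≠ i1 → x i' = 0 := by
          intro i' hi' hne
          have hsplit := Finset.add_sum_erase (univ.filter (fun i : Fin d => (i:ℕ) < d-1))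
            x (mem_filter.mpr ⟨mem_univ _, hi1⟩)
          have hSeq' : ∑ i'' ∈ univ.filter (fun i : Fin d => (i:ℕ) < d-1), x i'' = 1 := by
            rw [← hS]; exact hSeq
          have hzero : ∑ i'' ∈ (univ.filter (fun i : Fin d => (i:ℕ) < d-1)).erase i1,
              x i'' = 0 := by omega
          have := (Finset.sum_eq_zero_iff_of_nonneg
            (fun i'' hi'' => F1 i'' (mem_filter.mp (mem_of_mem_erase hi'')).2)).mp hzero
          exact this i' (mem_erase.mpr ⟨hne, mem_filter.mpr ⟨mem_univ _, hi'⟩⟩)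
        refine Finset.mem_union_left _ (Finset.mem_union_left _ (Finset.mem_union_right _
          (Finset.mem_image.mpr ⟨i1, mem_filter.mpr ⟨mem_univ _, hi1⟩, ?_⟩)))
        funext i'
        rcases eq_or_ne i' i1 with rfl | hne
        · rw [Pi.single_eq_same]
          exact hione.symm
        · rw [Pi.single_eq_of_ne hne]
          rcases Nat.lt_or_ge (i':ℕ) (d-1) with h | h
          · exact (hrest i' h hne).symm
          · have hie : i' = idx := Fin.ext (by simp only [hidx]; have := i'.isLt; omega)
            rw [hie, ht]
  · intro z hz
    have h1 : intVec z ∈ intVec '' ((VS d w k : Set (Fin d → ℤ))) := ⟨z, hz, rfl⟩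
    rw [genset d w k] at h1
    show intVec z ∈ Pdwk d w k
    unfold Pdwk
    exact subset_convexHull ℝ _ h1

lemma VS_card (d w : ℕ) (k : ℤ) (hd : 3 ≤ d) (hw : d + 1 ≤ w) (hk : 0 < k) :
    (VS d w k).card = w := by
  have hd0 : 0 < d := by omega
  let idx : Fin d := ⟨d-1, by omega⟩
  have hbival : ∀ j : ℕ, bI d j idx = -(j:ℤ) := fun j => if_pos rfl
  have hvidx : vI d k idx = k := if_pos rfl
  have i0lt : (0:ℕ) < d := by omega
  have i1lt : (1:ℕ) < d := by omega
  have hb0cond : ¬ (((⟨0, i0lt⟩ : Fin d) : ℕ) = d - 1) := by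
    show ¬ (0 = d - 1); omega
  have hb1cond : ¬ (((⟨1, i1lt⟩ : Fin d) : ℕ) = d - 1) := by
    show ¬ (1 = d - 1); omega
  have hbi0 : ∀ j : ℕ, bI d j ⟨0, i0lt⟩ = 0 := fun j => if_neg hb0cond
  have hv0 : vI d k ⟨0, i0lt⟩ = 1 := if_neg hb0cond
  have hv1 : vI d k ⟨1, i1lt⟩ = 1 := if_neg hb1cond
  set E := (univ.filter (fun i : Fin d => (i:ℕ) < d-1)).image
    (fun i : Fin d => Pi.single i (1:ℤ)) with hE
  set B := (Finset.Icc 1 (w-d-1)).image (bI d) with hB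
  have singleE : ∀ z ∈ E, ∃ i : Fin d, (i:ℕ) < d-1 ∧ z = Pi.single i 1 := by
    intro z hz
    obtain ⟨i, hi, rfl⟩ := Finset.mem_image.mp hz
    exact ⟨i, (mem_filter.mp hi).2, rfl⟩
  have memB : ∀ z ∈ B, ∃ j : ℕ, 1 ≤ j ∧ j ≤ w-d-1 ∧ z = bI d j := by
    intro z hz
    obtain ⟨j, hj, rfl⟩ := Finset.mem_image.mp hz
    obtain ⟨h1, h2⟩ := Finset.mem_Icc.mp hj
    exact ⟨j, h1, h2, rfl⟩
  have singleAtIdx : ∀ i : Fin d, (i:ℕ) < d-1 → (Pi.single i (1:ℤ) : Fin d → ℤ) idx = 0 := by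
    intro i hi
    apply Pi.single_eq_of_ne
    intro h
    rw [Fin.ext_iff] at h
    have : (idx : ℕ) = d - 1 := rfl
    omega
  have cardE : E.card = d - 1 := by
    rw [hE, Finset.card_image_of_injOn, card_filter_lt d hd]
    intro i _ i' _ h
    by_contra hne
    have h1 : (Pi.single i (1:ℤ) : Fin d → ℤ) i = (Pi.single i' (1:ℤ) : Fin d → ℤ) i :=
      congrFun h i
    rw [Pi.single_eq_same, Pi.single_eq_of_ne (show i ≠ i' from fun hh => hne hh)] at h1
    exact one_ne_zero h1
  have cardB : B.card = w - d - 1 := by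
    have hinj : Set.InjOn (bI d) ↑(Finset.Icc 1 (w-d-1)) := by
      intro j _ j' _ h
      have h1 : bI d j idx = bI d j' idx := congrFun h idx
      rw [hbival j, hbival j'] at h1
      omega
    rw [hB, Finset.card_image_of_injOn hinj, Nat.card_Icc]
    omega
  have d1 : Disjoint {(0 : Fin d → ℤ)} E := by
    rw [Finset.disjoint_left]
    intro z hz hz'
    rw [Finset.mem_singleton] at hz
    obtain ⟨i, hi, rfl⟩ := singleE z hz'
    have : (Pi.single i (1:ℤ) : Fin d → ℤ) i = 0 := congrFun hz i
    rw [Pi.single_eq_same] at this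
    exact one_ne_zero this
  have d2 : Disjoint ({(0 : Fin d → ℤ)} ∪ E) B := by
    rw [Finset.disjoint_left]
    intro z hz hz'
    obtain ⟨j, hj1, hj2, rfl⟩ := memB z hz'
    rcases Finset.mem_union.mp hz with hz | hz
    · rw [Finset.mem_singleton] at hz
      have : bI d j idx = 0 := congrFun hz idx
      rw [hbival j] at this
      omega
    · obtain ⟨i, hi, heq⟩ := singleE _ hz
      have : bI d j idx = (Pi.single i (1:ℤ) : Fin d → ℤ) idx := by rw [← heq]
      rw [hbival j, singleAtIdx i hi] at this
      omega
  have d3 : Disjoint ({(0 : Fin d → ℤ)} ∪ E ∪ B) {vI d k} := by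
    rw [Finset.disjoint_right]
    intro z hz hz'
    rw [Finset.mem_singleton] at hz
    subst hz
    rcases Finset.mem_union.mp hz' with hz' | hz'
    · rcases Finset.mem_union.mp hz' with hz' | hz'
      · rw [Finset.mem_singleton] at hz'
        have h1 : vI d k ⟨0, i0lt⟩ = 0 := congrFun hz' ⟨0, i0lt⟩
        rw [hv0] at h1
        exact one_ne_zero h1
      · obtain ⟨i, hi, heq⟩ := singleE _ hz'
        rcases eq_or_ne i ⟨0, i0lt⟩ with h01 | h01
        · have hne10 : (⟨1, i1lt⟩ : Fin d) ≠ i := by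
            rw [h01]
            intro hh
            have h2 := Fin.ext_iff.mp hh
            have e1 : ((⟨1, i1lt⟩ : Fin d) : ℕ) = 1 := rfl
            have e0 : ((⟨0, i0lt⟩ : Fin d) : ℕ) = 0 := rfl
            omega
          have h1 : vI d k ⟨1, i1lt⟩ = (Pi.single i (1:ℤ) : Fin d → ℤ) ⟨1, i1lt⟩ :=
            congrFun heq ⟨1, i1lt⟩
          rw [hv1, Pi.single_eq_of_ne hne10] at h1
          exact one_ne_zero h1
        · have h1 : vI d k ⟨0, i0lt⟩ = (Pi.single i (1:ℤ) : Fin d → ℤ) ⟨0, i0lt⟩ :=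
            congrFun heq ⟨0, i0lt⟩
          rw [hv0, Pi.single_eq_of_ne (Ne.symm h01)] at h1
          exact one_ne_zero h1
    · obtain ⟨j, hj1, hj2, heq⟩ := memB _ hz'
      have h1 : vI d k ⟨0, i0lt⟩ = bI d j ⟨0, i0lt⟩ := congrFun heq ⟨0, i0lt⟩
      rw [hv0, hbi0 j] at h1
      exact one_ne_zero h1
  have c1 : ({(0 : Fin d → ℤ)} ∪ E).card = 1 + (d - 1) := by
    rw [Finset.card_union_of_disjoint d1, Finset.card_singleton, cardE]
  have c2 : ({(0 : Fin d → ℤ)} ∪ E ∪ B).card = 1 + (d - 1) + (w - d - 1) := by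
    rw [Finset.card_union_of_disjoint d2, c1, cardB]
  have c3 : (VS d w k).card = 1 + (d - 1) + (w - d - 1) + 1 := by
    rw [VS, Finset.card_union_of_disjoint d3, Finset.card_singleton, c2]
  rw [c3]
  omega

lemma pdwk_fulldim (d w : ℕ) (k : ℤ) (hd : 3 ≤ d) (hk : 0 < k) :
    affineSpan ℝ (Pdwk d w k) = ⊤ := by
  set G : Set (Fin d → ℝ) := ({0} ∪ {x | ∃ i : Fin d, (i : ℕ) < d - 1 ∧ x = Pi.single i 1}
    ∪ {x | ∃ j : ℕ, 1 ≤ j ∧ j ≤ w - d - 1 ∧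
        x = fun i : Fin d => if (i : ℕ) = d - 1 then -(j : ℝ) else 0}
    ∪ {fun i : Fin d => if (i : ℕ) = d - 1 then (k : ℝ) else 1}) with hG
  have hPG : Pdwk d w k = convexHull ℝ G := rfl
  rw [hPG, affineSpan_convexHull]
  have h0G : (0 : Fin d → ℝ) ∈ G := Or.inl (Or.inl (Or.inl rfl))
  have hvG : (fun i : Fin d => if (i : ℕ) = d - 1 then (k : ℝ) else 1) ∈ G := Or.inr rfl
  have hsingleG : ∀ i : Fin d, (i:ℕ) < d - 1 → Pi.single i (1:ℝ) ∈ G :=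
    fun i hi => Or.inl (Or.inl (Or.inr ⟨i, hi, rfl⟩))
  rw [AffineSubspace.affineSpan_eq_top_iff_vectorSpan_eq_top_of_nonempty ℝ (Fin d → ℝ) (Fin d → ℝ) ⟨0, h0G⟩]
  have hspanle : Submodule.span ℝ G ≤ vectorSpan ℝ G := by
    rw [Submodule.span_le]
    intro g hg
    have := vsub_mem_vectorSpan ℝ hg h0G
    simpa using this
  suffices hspan : Submodule.span ℝ G = ⊤ by
    rw [eq_top_iff, ← hspan]
    exact hspanle
  have idxlt : d - 1 < d := by omega
  set idx : Fin d := ⟨d-1, idxlt⟩ with hidx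
  have hsingles : ∀ i : Fin d, Pi.single i (1:ℝ) ∈ Submodule.span ℝ G := by
    intro i
    rcases Nat.lt_or_ge (i:ℕ) (d-1) with h | h
    · exact Submodule.subset_span (hsingleG i h)
    · have hival : (i:ℕ) = d - 1 := by
        have := i.isLt
        omega
      have hkey : (k:ℝ) • (Pi.single i (1:ℝ) : Fin d → ℝ) =
          (fun i : Fin d => if (i : ℕ) = d - 1 then (k : ℝ) else 1)
            - ∑ i' ∈ univ.filter (fun i' : Fin d => (i':ℕ) < d-1), Pi.single i' (1:ℝ) := by
        funext ii
        simp only [Pi.smul_apply, Pi.sub_apply, smul_eq_mul]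
        rw [Finset.sum_apply]
        rw [Finset.sum_congr rfl (fun i' _ => Pi.single_apply i' (1:ℝ) ii),
          Finset.sum_ite_eq _ ii (fun _ => (1:ℝ))]
        by_cases hii : (ii:ℕ) = d - 1
        · have : ii = i := by apply Fin.ext; rw [hii, hival]
          subst this
          rw [if_pos hii, Pi.single_eq_same, mul_one,
            if_neg (by simp only [mem_filter]; omega)]
          ring
        · have hne : ii ≠ i := fun hcc => hii (by rw [hcc, hival])
          rw [if_neg hii, Pi.single_eq_of_ne hne, mul_zero,
            if_pos (by simp only [mem_filter, mem_univ, true_and]; have := ii.isLt; omega)]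
          ring
      have hsum : (∑ i' ∈ univ.filter (fun i' : Fin d => (i':ℕ) < d-1),
          Pi.single i' (1:ℝ)) ∈ Submodule.span ℝ G :=
        Submodule.sum_mem _ (fun i' hi' =>
          Submodule.subset_span (hsingleG i' (mem_filter.mp hi').2))
      have hvmem : (fun i : Fin d => if (i : ℕ) = d - 1 then (k : ℝ) else 1)
          ∈ Submodule.span ℝ G := Submodule.subset_span hvG
      have hksingle : (k:ℝ) • (Pi.single i (1:ℝ) : Fin d → ℝ) ∈ Submodule.span ℝ G := by
        rw [hkey]
        exact Submodule.sub_mem _ hvmem hsum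
      have hkne : (k:ℝ) ≠ 0 := by
        simp only [ne_eq, Int.cast_eq_zero]
        omega
      have := Submodule.smul_mem _ (k:ℝ)⁻¹ hksingle
      rwa [inv_smul_smul₀ hkne] at this
  rw [eq_top_iff, ← (Pi.basisFun ℝ (Fin d)).span_eq, Submodule.span_le]
  rintro y ⟨i, rfl⟩
  rw [Pi.basisFun_apply]
  exact hsingles i

/-- For `d ≥ 3`, `w ≥ d + 1` and `k ≥ 1`, the polytope `P(d,w,k)` is a
`d`-dimensional convex lattice polytope with exactly `w` lattice points. -/
theorem Pdwk_is_polytope_card (d w : ℕ) (k : ℤ) (hd : 3 ≤ d) (hw : d + 1 ≤ w)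
    (hk : 0 < k) :
    IsConvexLatticePolytope d (Pdwk d w k) ∧ IsFullDim d (Pdwk d w k) ∧
      (latticePts d (Pdwk d w k)).ncard = w := by
  refine ⟨⟨VS d w k, ?_⟩, ?_, ?_⟩
  · unfold Pdwk
    rw [genset d w k]
  · exact pdwk_fulldim d w k hd hk
  · rw [latticePts_eq d w k hd hw hk, Set.ncard_coe_finset, VS_card d w k hd hw hk]

end
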